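/- Let B ⊆ M be closed in K = (G, M, I) with Δ(B) ≥ δ, i.e., for every m ∈ M \ B, |B'| − |(B ∪ {m})'| ≥ δ. Then for any G_s ⊆ G with |G \ G_s| < δ, the set B remains closed in the sampled context K_s = (G_s, M, I_s). -/
import Mathlib


def extentOf {G M : Type*} (I : G → M → Prop) (B : Set M) : Set G :=
  {g | ∀ m ∈ B, I g m}

def intentOf {G M : Type*} (I : G → M → Prop) (A : Set G) : Set M :=
  {m | ∀ g ∈ A, I g m}

def DeltaClosed {G M : Type*} (I : G → M → Prop) (Δ : ℕ) (B : Set M) : Prop :=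
  ∀ m ∉ B, (extentOf I B).ncard - (extentOf I (insert m B)).ncard ≥ Δ

/-- If `B` is closed with `Δ(B) ≥ δ`, then `B` remains closed after removing
fewer than `δ` objects (derivations in the sample: `B'_{K_s} = B' ∩ Gs`). -/
theorem deltaClosed_stable_under_sampling {G M : Type*} [Finite G]
    (I : G → M → Prop) (B : Set M) (δ : ℕ)
    (hclosed : intentOf I (extentOf I B) = B)
    (hδ : DeltaClosed I δ B)
    (Gs : Set G) (hGs : (Gsᶜ).ncard < δ) :
    intentOf I (extentOf I B ∩ Gs) = B := by
  apply Set.Subset.antisymm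
  · intro m hm
    by_contra hmB
    have hsub : extentOf I B ∩ Gs ⊆ extentOf I (insert m B) := by
      intro g hg
      intro a ha
      rcases ha with rfl | haB
      · exact hm g hg
      · exact hg.1 a haB
    have hsub2 : extentOf I (insert m B) ⊆ extentOf I B := by
      intro g hg a ha
      exact hg a (Set.mem_insert_of_mem m ha)
    have hcov : extentOf I B ⊆ (extentOf I B ∩ Gs) ∪ Gsᶜ := by
      intro g hg
      by_cases h : g ∈ Gs
      · exact Or.inl ⟨hg, h⟩
      · exact Or.inr h
    have h1 : (extentOf I B).ncard ≤ (extentOf I B ∩ Gs).ncard + (Gsᶜ).ncard :=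
      le_trans (Set.ncard_le_ncard hcov (Set.toFinite _)) (Set.ncard_union_le _ _)
    have h2 : (extentOf I B ∩ Gs).ncard ≤ (extentOf I (insert m B)).ncard :=
      Set.ncard_le_ncard hsub (Set.toFinite _)
    have hδm := hδ m hmB
    omega
  · intro a ha
    intro g hg
    exact hg.1 a ha
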